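/- Let k ≥ 2 and n₁ ≥ n₂ ≥ ... ≥ n_k ≥ 1 be integers, let i* ∈ [k], and let Δ be a real number such that there exist m ∈ ℕ and a matrix A ∈ [0,1]^{n′×m}, with n′ = ⌊n_{i*}/2⌋, whose (1/k)-weighted discrepancy satisfies wdisc_{1/k}(A) ≥ Δ. Then for every real c < (i*/k)·Δ, there exists a group fair division instance with group sizes n₁,...,n_k (with all item utilities in [0,1]) that admits no PROPc allocation. Consequently, c^PROP(n₁,...,n_k) ≥ max over i* ∈ [k] of (i*/k)·wdisc^max_{1/k}(⌊n_{i*}/2⌋). -/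

import Mathlib

open Finset

/-- The `∞`-norm of a vector: the maximum absolute value of a coordinate. -/
noncomputable def infNorm {n : ℕ} (v : Fin n → ℝ) : ℝ := ⨆ i, |v i|

/-- The `p`-weighted discrepancy of a matrix `A ∈ [0,1]^{n×m}`:
`wdisc_p(A) = min over x ∈ {0,1}^m of ‖A(p·𝟏 − x)‖_∞`. -/
noncomputable def wdisc (p : ℝ) {n m : ℕ} (A : Matrix (Fin n) (Fin m) ℝ) : ℝ :=
  ⨅ x : Fin m → Fin 2, infNorm (A.mulVec (fun j => p - ((x j : ℕ) : ℝ)))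

/-- The bundle of group `i` under the allocation `χ : [m] → [k]`. -/
def bundle {k m : ℕ} (χ : Fin m → Fin k) (i : Fin k) : Finset (Fin m) :=
  Finset.univ.filter (fun g => χ g = i)

/-- An allocation `χ` is proportional up to `c` goods (PROP`c`): for all `i ∈ [k]` and
`j ∈ [n_i]` there exists `B ⊆ G \ A_i` with `|B| ≤ c` such that
`u^{(i,j)}(A_i) ≥ u^{(i,j)}(G)/k − u^{(i,j)}(B)`. -/
def IsProp {k m : ℕ} (ns : Fin k → ℕ) (u : ∀ i : Fin k, Fin (ns i) → Fin m → ℝ)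
    (χ : Fin m → Fin k) (c : ℝ) : Prop :=
  ∀ (i : Fin k) (j : Fin (ns i)), ∃ B : Finset (Fin m),
    (∀ g ∈ B, g ∉ bundle χ i) ∧ (B.card : ℝ) ≤ c ∧
    ∑ g ∈ bundle χ i, u i j g ≥ (∑ g, u i j g) / (k : ℝ) - ∑ g ∈ B, u i j g

/-- Let `k ≥ 2` and `n₁ ≥ ⋯ ≥ n_k ≥ 1` be integers (given as an
antitone `ns : Fin k → ℕ`), let `i* ∈ [k]` (`istar : Fin k`, representing the
`(istar + 1)`-st group), and let `Δ` be such that some matrix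
`A ∈ [0,1]^{⌊n_{i*}/2⌋ × m}` has `wdisc_{1/k}(A) ≥ Δ`.  Then for every real
`c < (i*/k)·Δ` there exists a group fair division instance with group sizes
`n₁, …, n_k` and all item utilities in `[0,1]` that admits no PROP`c` allocation.
Consequently `c^PROP(n₁,…,n_k) ≥ max_{i*} (i*/k)·wdisc^max_{1/k}(⌊n_{i*}/2⌋)`. -/
theorem prop_lower_bound_from_wdisc (k : ℕ) (hk : 2 ≤ k) (ns : Fin k → ℕ)
    (hmono : ∀ a b : Fin k, a ≤ b → ns b ≤ ns a) (hpos : ∀ i, 1 ≤ ns i)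
    (istar : Fin k) (Δ : ℝ)
    (hΔ : ∃ (m : ℕ) (A : Matrix (Fin (ns istar / 2)) (Fin m) ℝ),
      (∀ i j, A i j ∈ Set.Icc (0 : ℝ) 1) ∧ Δ ≤ wdisc (1 / (k : ℝ)) A) :
    ∀ c : ℝ, c < (((istar : ℕ) : ℝ) + 1) / (k : ℝ) * Δ →
      ∃ (m : ℕ) (u : ∀ i : Fin k, Fin (ns i) → Fin m → ℝ),
        (∀ i j g, u i j g ∈ Set.Icc (0 : ℝ) 1) ∧
        ∀ χ : Fin m → Fin k, ¬ IsProp ns u χ c := by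
  classical
  intro c hc
  set n' : ℕ := ns istar / 2 with hn'_def
  obtain ⟨m, A, hA, hwd⟩ := hΔ
  rcases lt_or_ge c 0 with hc0 | hc0
  · -- trivial case `c < 0`
    refine ⟨0, fun i j g => 0, by intro i j g; simp, ?_⟩
    intro χ hP
    obtain ⟨B, -, hBc, -⟩ := hP istar ⟨0, hpos istar⟩
    have : (0 : ℝ) ≤ (B.card : ℝ) := Nat.cast_nonneg _
    linarith
  -- basic positivity facts
  have hkpos : 0 < k := by omega
  have hkR : (0 : ℝ) < (k : ℝ) := by exact_mod_cast hkpos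
  set T : ℝ := ((istar : ℕ) : ℝ) + 1 with hT_def
  have hTpos : 0 < T := by positivity
  have hT1 : (1 : ℝ) ≤ T := by
    have : (0 : ℝ) ≤ ((istar : ℕ) : ℝ) := Nat.cast_nonneg _
    linarith
  have htk : (istar : ℕ) + 1 ≤ k := istar.isLt
  have hTK : T ≤ (k : ℝ) := by
    rw [hT_def]
    exact_mod_cast htk
  have hΔpos : 0 < Δ := by
    by_contra h
    push_neg at h
    have h1 : T / (k : ℝ) * Δ ≤ 0 :=
      mul_nonpos_of_nonneg_of_nonpos (by positivity) h
    linarith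
  have hcK : c * (k : ℝ) < T * Δ := by
    have := (lt_div_iff₀ hkR).mp (by rw [div_mul_eq_mul_div] at hc; exact hc)
    linarith
  have hn'pos : 0 < n' := by
    rcases Nat.eq_zero_or_pos n' with h0 | h
    · exfalso
      haveI : IsEmpty (Fin n') := by rw [h0]; infer_instance
      have hz : wdisc (1 / (k : ℝ)) A = 0 := by
        unfold wdisc infNorm
        simp [Real.iSup_of_isEmpty, ciInf_const]
      rw [hz] at hwd
      linarith
    · exact h
  haveI : Nonempty (Fin n') := ⟨⟨0, hn'pos⟩⟩
  have h2n' : 2 * n' ≤ ns istar := by omega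
  -- extended matrix
  set Ae : ℕ → Fin m → ℝ := fun r g => if h : r < n' then A ⟨r, h⟩ g else 0 with hAe_def
  have hAe : ∀ (r : ℕ) (g : Fin m), 0 ≤ Ae r g ∧ Ae r g ≤ 1 := by
    intro r g
    rw [hAe_def]
    dsimp only
    split_ifs with h
    · exact Set.mem_Icc.mp (hA _ _)
    · norm_num
  -- the utilities
  set u : ∀ i : Fin k, Fin (ns i) → Fin m → ℝ := fun i j g =>
    if (i : ℕ) ≤ (istar : ℕ) then
      (if (j : ℕ) < n' then Ae (j : ℕ) g
       else if (j : ℕ) < 2 * n' then 1 - Ae ((j : ℕ) - n') g else 0)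
    else 1 with hu_def
  have hu01 : ∀ i j g, u i j g ∈ Set.Icc (0 : ℝ) 1 := by
    intro i j g
    rw [hu_def]
    dsimp only
    rw [Set.mem_Icc]
    split_ifs with h1 h2 h3
    · exact hAe _ _
    · have := hAe ((j : ℕ) - n') g
      constructor <;> linarith [this.1, this.2]
    · norm_num
    · norm_num
  refine ⟨m, u, hu01, ?_⟩
  intro χ hP
  -- the bundle sizes
  set F : Fin k → ℝ := fun i => ((bundle χ i).card : ℝ) with hF_def
  have hcard_sum : ∑ i : Fin k, (bundle χ i).card = m := by
    have h := Finset.card_eq_sum_card_fiberwise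
      (f := χ) (s := (univ : Finset (Fin m))) (t := (univ : Finset (Fin k)))
      (fun x _ => mem_univ _)
    simpa [bundle] using h.symm
  have hFsum : ∑ i : Fin k, F i = (m : ℝ) := by
    rw [hF_def]
    show ∑ i : Fin k, ((bundle χ i).card : ℝ) = (m : ℝ)
    exact_mod_cast hcard_sum
  have hFnonneg : ∀ i, 0 ≤ F i := fun i => Nat.cast_nonneg _
  -- count agents force big bundles outside the first `t` groups
  have hbig : ∀ i : Fin k, (istar : ℕ) < (i : ℕ) → (m : ℝ) / (k : ℝ) - c ≤ F i := by
    intro i hi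
    obtain ⟨B, hBd, hBc, hineq⟩ := hP i ⟨0, hpos i⟩
    have hui : ∀ g, u i ⟨0, hpos i⟩ g = 1 := by
      intro g
      rw [hu_def]
      dsimp only
      rw [if_neg (by omega)]
    simp only [hui] at hineq
    rw [Finset.sum_const, Finset.sum_const, Finset.sum_const, Finset.card_univ,
      Fintype.card_fin] at hineq
    simp only [nsmul_eq_mul, mul_one] at hineq
    rw [hF_def]
    dsimp only
    linarith
  -- counting argument over the first `t` groups
  set s₁ : Finset (Fin k) := univ.filter (fun i : Fin k => (i : ℕ) ≤ (istar : ℕ)) with hs₁_def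
  set s₂ : Finset (Fin k) := univ.filter (fun i : Fin k => ¬ (i : ℕ) ≤ (istar : ℕ)) with hs₂_def
  have hs₁card : s₁.card = (istar : ℕ) + 1 := by
    have : s₁ = Finset.Iic istar := by
      rw [hs₁_def]
      ext i
      simp only [Finset.mem_filter, Finset.mem_univ, true_and, Finset.mem_Iic, Fin.le_def]
    rw [this, Fin.card_Iic]
  have hs₂card : s₂.card = k - ((istar : ℕ) + 1) := by
    have hs₂eq : s₂ = univ \ s₁ := by
      rw [hs₂_def, hs₁_def, Finset.filter_not]
    rw [hs₂eq, Finset.card_sdiff_of_subset (Finset.subset_univ _), Finset.card_univ,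
      Fintype.card_fin, hs₁card]
  have hktcast : ((k - ((istar : ℕ) + 1) : ℕ) : ℝ) = (k : ℝ) - T := by
    rw [Nat.cast_sub htk, hT_def]
    push_cast
    ring
  have hsum2 : ((k : ℝ) - T) * ((m : ℝ) / (k : ℝ) - c) ≤ ∑ i ∈ s₂, F i := by
    have h := Finset.card_nsmul_le_sum s₂ F ((m : ℝ) / (k : ℝ) - c)
      (fun i hi => hbig i (by
        rw [hs₂_def] at hi
        simp only [Finset.mem_filter, Finset.mem_univ, true_and] at hi
        omega))
    rw [hs₂card, nsmul_eq_mul, hktcast] at h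
    exact h
  have hsplit : ∑ i ∈ s₁, F i + ∑ i ∈ s₂, F i = (m : ℝ) := by
    rw [hs₁_def, hs₂_def, Finset.sum_filter_add_sum_filter_not]
    exact hFsum
  -- pigeonhole: some early group has a small bundle
  have hs₁ne : s₁.Nonempty := ⟨istar, by simp [hs₁_def]⟩
  obtain ⟨i0, hi0mem, hi0⟩ := Finset.exists_le_of_sum_le (f := F)
    (g := fun _ => ((m : ℝ) - ((k : ℝ) - T) * ((m : ℝ) / (k : ℝ) - c)) / T) hs₁ne
    (by
      rw [Finset.sum_const, hs₁card, nsmul_eq_mul]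
      have hcast : (((istar : ℕ) + 1 : ℕ) : ℝ) = T := by rw [hT_def]; push_cast; ring
      rw [hcast, mul_div_cancel₀ _ (ne_of_gt hTpos)]
      linarith)
  have hi0istar : (i0 : ℕ) ≤ (istar : ℕ) := by
    rw [hs₁_def] at hi0mem
    simpa using hi0mem
  have hi0T : T * F i0 ≤ (m : ℝ) - ((k : ℝ) - T) * ((m : ℝ) / (k : ℝ) - c) := by
    have := mul_le_mul_of_nonneg_left hi0 (le_of_lt hTpos)
    rwa [mul_div_cancel₀ _ (ne_of_gt hTpos)] at this
  have hnsle : 2 * n' ≤ ns i0 :=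
    le_trans h2n' (hmono i0 istar (by rw [Fin.le_def]; exact hi0istar))
  -- apply the discrepancy bound to the bundle of group i0
  set x : Fin m → Fin 2 := fun g => if χ g = i0 then 1 else 0 with hx_def
  have hxval : ∀ g, (((x g : ℕ)) : ℝ) = if χ g = i0 then 1 else 0 := by
    intro g
    rw [hx_def]
    dsimp only
    split_ifs <;> norm_num
  have hmulvec : ∀ r : Fin n',
      A.mulVec (fun j => 1 / (k : ℝ) - ((x j : ℕ) : ℝ)) r
        = (∑ g, A r g) / (k : ℝ) - ∑ g ∈ bundle χ i0, A r g := by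
    intro r
    simp only [Matrix.mulVec, dotProduct, hxval, mul_sub]
    rw [Finset.sum_sub_distrib]
    congr 1
    · rw [Finset.sum_div]
      exact Finset.sum_congr rfl fun g _ => by ring
    · rw [bundle, Finset.sum_filter]
      apply Finset.sum_congr rfl
      intro g _
      split_ifs <;> simp
  have hbdd : BddBelow (Set.range fun x : Fin m → Fin 2 =>
      infNorm (A.mulVec (fun j => 1 / (k : ℝ) - ((x j : ℕ) : ℝ)))) := by
    refine ⟨0, ?_⟩
    rintro y ⟨x', rfl⟩
    exact Real.iSup_nonneg (fun i => abs_nonneg _)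
  have hdinf : Δ ≤ infNorm (A.mulVec (fun j => 1 / (k : ℝ) - ((x j : ℕ) : ℝ))) :=
    le_trans hwd (ciInf_le hbdd x)
  set ε : ℝ := (T * Δ - c * (k : ℝ)) / (2 * T) with hε_def
  have hεpos : 0 < ε := by
    rw [hε_def]
    apply div_pos (by linarith) (by linarith)
  have hεT : 2 * T * ε = T * Δ - c * (k : ℝ) := by
    rw [hε_def]
    field_simp
  have hcε : c < Δ - ε := by
    have hcT : c * T ≤ c * (k : ℝ) := mul_le_mul_of_nonneg_left hTK hc0
    have h1 : T * c < T * (Δ - ε) := by nlinarith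
    exact lt_of_mul_lt_mul_left h1 (le_of_lt hTpos)
  have hrow : ∃ r : Fin n',
      Δ - ε < |(∑ g, A r g) / (k : ℝ) - ∑ g ∈ bundle χ i0, A r g| := by
    by_contra h
    push_neg at h
    have : infNorm (A.mulVec (fun j => 1 / (k : ℝ) - ((x j : ℕ) : ℝ))) ≤ Δ - ε := by
      apply ciSup_le
      intro r
      rw [hmulvec r]
      exact h r
    linarith
  obtain ⟨r, hr⟩ := hrow
  set σ : ℝ := ∑ g, A r g with hσ_def
  set uS : ℝ := ∑ g ∈ bundle χ i0, A r g with huS_def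
  rcases lt_abs.mp hr with hcase | hcase
  · -- positive discrepancy: the row agent is unhappy
    have hjlt : (r : ℕ) < ns i0 := by have := r.isLt; omega
    obtain ⟨B, hBd, hBc, hineq⟩ := hP i0 ⟨(r : ℕ), hjlt⟩
    have huj : ∀ g, u i0 ⟨(r : ℕ), hjlt⟩ g = A r g := by
      intro g
      rw [hu_def]
      dsimp only
      rw [if_pos hi0istar, if_pos r.isLt, hAe_def]
      dsimp only
      rw [dif_pos r.isLt]
    simp only [huj] at hineq
    have hBsum : ∑ g ∈ B, A r g ≤ (B.card : ℝ) := by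
      have := Finset.sum_le_card_nsmul B (fun g => A r g) 1
        (fun g _ => by exact (Set.mem_Icc.mp (hA r g)).2)
      simpa using this
    rw [← hσ_def, ← huS_def] at hineq
    linarith
  · -- negative discrepancy: the complement agent is unhappy
    have hjlt : n' + (r : ℕ) < ns i0 := by have := r.isLt; omega
    obtain ⟨B, hBd, hBc, hineq⟩ := hP i0 ⟨n' + (r : ℕ), hjlt⟩
    have huj : ∀ g, u i0 ⟨n' + (r : ℕ), hjlt⟩ g = 1 - A r g := by
      intro g
      rw [hu_def]
      dsimp only
      rw [if_pos hi0istar, if_neg (by omega), if_pos (by have := r.isLt; omega)]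
      rw [hAe_def]
      dsimp only
      have hsub : n' + (r : ℕ) - n' = (r : ℕ) := by omega
      rw [hsub, dif_pos r.isLt]
    simp only [huj] at hineq
    have hBsum : ∑ g ∈ B, (1 - A r g) ≤ (B.card : ℝ) := by
      have := Finset.sum_le_card_nsmul B (fun g => 1 - A r g) 1
        (fun g _ => by linarith [(Set.mem_Icc.mp (hA r g)).1])
      simpa using this
    have hsum1 : ∑ g ∈ bundle χ i0, (1 - A r g) = F i0 - uS := by
      rw [Finset.sum_sub_distrib, Finset.sum_const, nsmul_eq_mul, mul_one, hF_def, huS_def]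
    have hsum2' : ∑ g : Fin m, (1 - A r g) = (m : ℝ) - σ := by
      rw [Finset.sum_sub_distrib, Finset.sum_const, Finset.card_univ, Fintype.card_fin,
        nsmul_eq_mul, mul_one, hσ_def]
    rw [hsum1, hsum2'] at hineq
    -- hineq : F i0 - uS ≥ (m - σ)/k - ∑ B (1 - A r g)
    have h3 : uS - σ / (k : ℝ) ≤ F i0 - (m : ℝ) / (k : ℝ) + c := by
      have : ((m : ℝ) - σ) / (k : ℝ) = (m : ℝ) / (k : ℝ) - σ / (k : ℝ) := by ring
      rw [this] at hineq
      linarith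
    have h4 : T * (uS - σ / (k : ℝ)) ≤ T * (F i0 - (m : ℝ) / (k : ℝ) + c) :=
      mul_le_mul_of_nonneg_left h3 (le_of_lt hTpos)
    have h5 : T * (Δ - ε) < T * (uS - σ / (k : ℝ)) :=
      mul_lt_mul_of_pos_left (by linarith) hTpos
    have hexp1 : (m : ℝ) - ((k : ℝ) - T) * ((m : ℝ) / (k : ℝ) - c)
        = T * ((m : ℝ) / (k : ℝ)) + ((k : ℝ) - T) * c := by
      field_simp
      ring
    rw [hexp1] at hi0T
    have hexp2 : T * (F i0 - (m : ℝ) / (k : ℝ) + c)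
        = T * F i0 - T * ((m : ℝ) / (k : ℝ)) + T * c := by ring
    have hexp3 : T * (Δ - ε) = T * Δ - T * ε := by ring
    have h6 : 0 < T * ε := mul_pos hTpos hεpos
    clear_value T ε σ uS F
    linarith
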